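/- Let B* = G* ×_1 C* ×_2 R*, where C* ∈ ℝ^{p1×K1} and R* ∈ ℝ^{p2×K2} have orthonormal columns equal to the top K1 and K2 left singular vectors of B*_(1) and B*_(2), Σ_C = diag(σ_1(B*_(1)),…,σ_{K1}(B*_(1))), Σ_R = diag(σ_1(B*_(2)),…,σ_{K2}(B*_(2))), and σ̲ = min(σ_{K1}(B*_(1)), σ_{K2}(B*_(2))) > 0. Let (G, C, R) be another triple with ‖(C − C*)Σ_C‖_F^2 + ‖(R − R*)Σ_R‖_F^2 + ‖G − G*‖_F^2 ≤ ε^2·σ̲^2 for some ε < 1. Then ‖G ×_1 C ×_2 R − G* ×_1 C* ×_2 R*‖_F ≤ (1 + (3/2)·ε + ε^2 + (1/4)·ε^3)·(‖(C − C*)Σ_C‖_F + ‖(R − R*)Σ_R‖_F + ‖G − G*‖_F). -/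

import Mathlib

noncomputable section

open scoped BigOperators

namespace HomoPursuit

open Matrix

/-- Squared Frobenius norm of a real matrix. -/
def frobSq {m n : Type*} [Fintype m] [Fintype n] (A : Matrix m n ℝ) : ℝ :=
  ∑ i, ∑ j, (A i j) ^ 2

/-- Frobenius norm of a real matrix. -/
def frob {m n : Type*} [Fintype m] [Fintype n] (A : Matrix m n ℝ) : ℝ :=
  Real.sqrt (frobSq A)

/-- Frobenius inner product `⟨A, B⟩ = tr(Aᵀ B)`. -/
def mdot {m n : Type*} [Fintype m] [Fintype n] (A B : Matrix m n ℝ) : ℝ :=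
  ∑ i, ∑ j, A i j * B i j

/-- The `j`-th largest singular value of a real matrix (1-indexed); `0` if out of range. -/
def sval {m n : Type*} [Fintype m] [Fintype n] [DecidableEq n] (A : Matrix m n ℝ) (j : ℕ) : ℝ :=
  (((Finset.univ.val.map fun i =>
      Real.sqrt ((Matrix.conjTranspose_eq_transpose_of_trivial A ▸
        Matrix.isHermitian_conjTranspose_mul_self A : (Aᵀ * A).IsHermitian).eigenvalues i)).toList.insertionSort
      (· ≥ ·)).getD (j - 1) 0)

/-- Spectral (operator) norm: the largest singular value. -/
def spec {m n : Type*} [Fintype m] [Fintype n] [DecidableEq n] (A : Matrix m n ℝ) : ℝ :=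
  sval A 1

/-- The positive-semidefinite square root `(Aᵀ A)^{1/2}` of a Gram matrix. -/
def gramSqrt {m k : Type*} [Fintype m] [Fintype k] [DecidableEq k] (A : Matrix m k ℝ) :
    Matrix k k ℝ :=
  (Matrix.posSemidef_conjTranspose_mul_self A).1.eigenvectorUnitary.1 *
    Matrix.diagonal ((RCLike.ofReal : ℝ → ℝ) ∘ Real.sqrt ∘
      (Matrix.posSemidef_conjTranspose_mul_self A).1.eigenvalues) *
    (star (Matrix.posSemidef_conjTranspose_mul_self A).1.eigenvectorUnitary : Matrix k k ℝ)

/-- `(Aᵀ A)^{-1/2}`. -/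
def invGramSqrt {m k : Type*} [Fintype m] [Fintype k] [DecidableEq k] (A : Matrix m k ℝ) :
    Matrix k k ℝ :=
  (gramSqrt A)⁻¹

/-- Square root of a diagonal matrix with given (nonnegative) diagonal entries. -/
def diagSqrt {k : ℕ} (d : Fin k → ℝ) : Matrix (Fin k) (Fin k) ℝ :=
  Matrix.diagonal fun j => Real.sqrt (d j)


section helpers
variable {m k l : Type*} [Fintype m] [Fintype k] [Fintype l]

lemma frobSq_nonneg (A : Matrix m k ℝ) : 0 ≤ frobSq A :=
  Finset.sum_nonneg fun _ _ => Finset.sum_nonneg fun _ _ => sq_nonneg _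

lemma frob_nonneg (A : Matrix m k ℝ) : 0 ≤ frob A := Real.sqrt_nonneg _

lemma sq_frob (A : Matrix m k ℝ) : frob A ^ 2 = frobSq A := Real.sq_sqrt (frobSq_nonneg A)

lemma frobSq_transpose (A : Matrix m k ℝ) : frobSq Aᵀ = frobSq A := by
  rw [frobSq, frobSq, Finset.sum_comm]; rfl

lemma frobSq_eq_trace (A : Matrix m k ℝ) : frobSq A = (A * Aᵀ).trace := by
  simp [frobSq, Matrix.trace, Matrix.mul_apply, Matrix.diag, sq]

lemma frobSq_eq_trace' (A : Matrix m k ℝ) : frobSq A = (Aᵀ * A).trace := by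
  rw [frobSq_eq_trace, Matrix.trace_mul_comm]

lemma mdot_le (A B : Matrix m k ℝ) : mdot A B ≤ frob A * frob B := by
  have h : mdot A B = ∑ p : m × k, A p.1 p.2 * B p.1 p.2 := by
    rw [mdot, ← Finset.sum_product']; rfl
  have h1 : frobSq A = ∑ p : m × k, (A p.1 p.2) ^ 2 := by
    rw [frobSq, ← Finset.sum_product']; rfl
  have h2 : frobSq B = ∑ p : m × k, (B p.1 p.2) ^ 2 := by
    rw [frobSq, ← Finset.sum_product']; rfl
  have hcs := Finset.sum_mul_sq_le_sq_mul_sq Finset.univ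
    (fun p : m × k => A p.1 p.2) (fun p => B p.1 p.2)
  rw [← h1, ← h2, ← h] at hcs
  have habs : mdot A B ≤ |mdot A B| := le_abs_self _
  refine habs.trans ?_
  rw [← Real.sqrt_sq_eq_abs, frob, frob, ← Real.sqrt_mul (frobSq_nonneg A)]
  exact Real.sqrt_le_sqrt hcs

lemma frobSq_add (A B : Matrix m k ℝ) :
    frobSq (A + B) = frobSq A + 2 * mdot A B + frobSq B := by
  simp only [frobSq, mdot, Matrix.add_apply, ← Finset.sum_add_distrib, Finset.mul_sum]
  congr 1; ext i; congr 1; ext j; ring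

lemma frob_add_le (A B : Matrix m k ℝ) : frob (A + B) ≤ frob A + frob B := by
  have h : frobSq (A + B) ≤ (frob A + frob B) ^ 2 := by
    rw [frobSq_add]
    have := mdot_le A B
    have := sq_frob A; have := sq_frob B
    nlinarith
  calc frob (A + B) ≤ Real.sqrt ((frob A + frob B) ^ 2) := Real.sqrt_le_sqrt h
    _ = frob A + frob B := Real.sqrt_sq (add_nonneg (frob_nonneg A) (frob_nonneg B))

lemma frob_mul_le (A : Matrix m k ℝ) (B : Matrix k l ℝ) :
    frob (A * B) ≤ frob A * frob B := by
  have h : frobSq (A * B) ≤ frobSq A * frobSq B := by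
    have key : ∀ i j, ((A * B) i j) ^ 2 ≤ (∑ t, A i t ^ 2) * (∑ t, B t j ^ 2) := by
      intro i j
      simpa [Matrix.mul_apply] using
        Finset.sum_mul_sq_le_sq_mul_sq Finset.univ (fun t => A i t) (fun t => B t j)
    calc frobSq (A * B) ≤ ∑ i, ∑ j, (∑ t, A i t ^ 2) * (∑ t, B t j ^ 2) :=
          Finset.sum_le_sum fun i _ => Finset.sum_le_sum fun j _ => key i j
      _ = frobSq A * frobSq B := by
          rw [frobSq, frobSq, Finset.sum_mul]
          refine Finset.sum_congr rfl fun i _ => ?_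
          rw [← Finset.mul_sum, Finset.sum_comm (γ := k)]
  calc frob (A * B) ≤ Real.sqrt (frobSq A * frobSq B) := Real.sqrt_le_sqrt h
    _ = frob A * frob B := Real.sqrt_mul (frobSq_nonneg A) _

lemma frobSq_unit_left [DecidableEq k] {C : Matrix m k ℝ} (hC : Cᵀ * C = 1) (M : Matrix k l ℝ) :
    frobSq (C * M) = frobSq M := by
  rw [frobSq_eq_trace', Matrix.transpose_mul, Matrix.mul_assoc, ← Matrix.mul_assoc Cᵀ C M,
    hC, Matrix.one_mul, ← frobSq_eq_trace']

lemma frobSq_unit_right [DecidableEq k] {R : Matrix m k ℝ} (hR : Rᵀ * R = 1) (M : Matrix l k ℝ) :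
    frobSq (M * Rᵀ) = frobSq M := by
  rw [← frobSq_transpose (M * Rᵀ), Matrix.transpose_mul, Matrix.transpose_transpose,
    frobSq_unit_left hR, frobSq_transpose]

end helpers

lemma getD_anti {l : List ℝ} (hs : List.Pairwise (· ≥ ·) l) (h0 : ∀ x ∈ l, 0 ≤ x)
    {i j : ℕ} (hij : i ≤ j) : l.getD j 0 ≤ l.getD i 0 := by
  by_cases hj : j < l.length
  · have hi : i < l.length := lt_of_le_of_lt hij hj
    rw [List.getD_eq_getElem l 0 hj, List.getD_eq_getElem l 0 hi]
    rcases eq_or_lt_of_le hij with h | h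
    · subst h; exact le_refl _
    · exact hs.rel_get_of_lt (a := ⟨i, hi⟩) (b := ⟨j, hj⟩) h
  · rw [List.getD_eq_default l 0 (le_of_not_gt hj)]
    by_cases hi : i < l.length
    · rw [List.getD_eq_getElem l 0 hi]
      exact h0 _ (List.getElem_mem hi)
    · rw [List.getD_eq_default l 0 (le_of_not_gt hi)]

lemma sval_anti {m n : Type*} [Fintype m] [Fintype n] [DecidableEq n] (A : Matrix m n ℝ)
    {i j : ℕ} (hij : i ≤ j) : sval A j ≤ sval A i := by
  unfold sval
  apply getD_anti
  · exact List.pairwise_insertionSort _ _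
  · intro x hx
    rw [List.mem_insertionSort] at hx
    rw [Multiset.mem_toList, Multiset.mem_map] at hx
    obtain ⟨y, _, rfl⟩ := hx
    exact Real.sqrt_nonneg _
  · exact Nat.sub_le_sub_right hij 1

set_option maxHeartbeats 1000000 in
lemma final_arith {a b g ca cr ε σ : ℝ} (ha : 0 ≤ a) (hb : 0 ≤ b) (hg : 0 ≤ g)
    (hca0 : 0 ≤ ca) (hcr0 : 0 ≤ cr) (hσ : 0 < σ) (hε : 0 ≤ ε)
    (hca : σ * ca ≤ a) (hcr : σ * cr ≤ b) (hq : a ^ 2 + b ^ 2 + g ^ 2 ≤ ε ^ 2 * σ ^ 2) :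
    a + b + g + (ca * b + ca * g + cr * g + ca * (cr * g)) ≤
      (1 + 3 / 2 * ε + ε ^ 2 + 1 / 4 * ε ^ 3) * (a + b + g) := by
  obtain ⟨s, hs_def⟩ : ∃ s, s = a + b + g := ⟨_, rfl⟩
  rw [← hs_def]
  have hs0 : 0 ≤ s := by rw [hs_def]; positivity
  have hεσ : 0 ≤ ε * σ := mul_nonneg hε hσ.le
  have hs2 : s ^ 2 ≤ 3 * (ε * σ) ^ 2 := by
    rw [hs_def]; nlinarith [sq_nonneg (a - b), sq_nonneg (a - g), sq_nonneg (b - g)]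
  have hs3 : s ≤ 3 * (ε * σ) := by nlinarith [sq_nonneg (s - 3 * (ε * σ))]
  have need1 : ca * b + ca * g + cr * g ≤ 3 / 2 * ε * s := by
    have h1 : σ * (ca * b) ≤ a * b := by nlinarith
    have h2 : σ * (ca * g) ≤ a * g := by nlinarith
    have h3 : σ * (cr * g) ≤ b * g := by nlinarith
    have h4 : a * b + a * g + b * g ≤ s ^ 2 / 2 := by
      rw [hs_def]; nlinarith [sq_nonneg a, sq_nonneg b, sq_nonneg g]
    have h5 : s ^ 2 ≤ 3 * (ε * σ) * s := by nlinarith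
    have h6 : σ * (ca * b + ca * g + cr * g) ≤ σ * (3 / 2 * ε * s) := by nlinarith
    exact le_of_mul_le_mul_left h6 hσ
  have need2 : ca * (cr * g) ≤ ε ^ 2 * s := by
    have h1 : (σ * ca) * (σ * cr) ≤ a * b :=
      mul_le_mul hca hcr (mul_nonneg hσ.le hcr0) ha
    have h2 : σ ^ 2 * (ca * (cr * g)) ≤ a * b * g := by
      have h := mul_le_mul_of_nonneg_right h1 hg
      ring_nf at h ⊢
      linarith
    have h3a : 2 * (a * b * g) ≤ g * (a ^ 2 + b ^ 2) := by
      nlinarith [mul_nonneg hg (sq_nonneg (a - b))]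
    have h3b : g * (a ^ 2 + b ^ 2) ≤ g * (ε ^ 2 * σ ^ 2) := by
      have : a ^ 2 + b ^ 2 ≤ ε ^ 2 * σ ^ 2 := by nlinarith [sq_nonneg g]
      exact mul_le_mul_of_nonneg_left this hg
    have h3c : g * (ε ^ 2 * σ ^ 2) ≤ s * (ε ^ 2 * σ ^ 2) := by
      have hgs : g ≤ s := by rw [hs_def]; linarith
      exact mul_le_mul_of_nonneg_right hgs (by positivity)
    have h3 : a * b * g ≤ s * (ε ^ 2 * σ ^ 2) / 2 := by linarith
    have h4 : σ ^ 2 * (ca * (cr * g)) ≤ σ ^ 2 * (ε ^ 2 * s) := by nlinarith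
    exact le_of_mul_le_mul_left h4 (by positivity)
  have hcube : 0 ≤ ε ^ 3 * s := by positivity
  nlinarith [need1, need2, hcube]

variable {p1 p2 n K1 K2 : ℕ}

/-- Mode-1 matricization of the tensor with frontal slices `B i`. -/
def mode1 (B : Fin n → Matrix (Fin p1) (Fin p2) ℝ) : Matrix (Fin p1) (Fin p2 × Fin n) ℝ :=
  Matrix.of fun a bc => B bc.2 a bc.1

/-- Mode-2 matricization. -/
def mode2 (B : Fin n → Matrix (Fin p1) (Fin p2) ℝ) : Matrix (Fin p2) (Fin p1 × Fin n) ℝ :=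
  Matrix.of fun b ac => B ac.2 ac.1 b

/-- Squared Frobenius norm of a third-order tensor given by its frontal slices. -/
def tfrobSq (B : Fin n → Matrix (Fin p1) (Fin p2) ℝ) : ℝ :=
  ∑ i, frobSq (B i)

/-- Frobenius norm of a third-order tensor. -/
def tfrob (B : Fin n → Matrix (Fin p1) (Fin p2) ℝ) : ℝ :=
  Real.sqrt (tfrobSq B)

/-- The Tucker product `G ×₁ C ×₂ R`, given by its frontal slices `C · G_i · Rᵀ`. -/
def tuck (G : Fin n → Matrix (Fin K1) (Fin K2) ℝ) (C : Matrix (Fin p1) (Fin K1) ℝ)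
    (R : Matrix (Fin p2) (Fin K2) ℝ) (i : Fin n) : Matrix (Fin p1) (Fin p2) ℝ :=
  C * G i * Rᵀ

/-- `C̃` with `C̃ᵀ = (G ×₂ R)_(1)`, so that `(G ×₁ C ×₂ R)_(1) = C C̃ᵀ`. -/
def tildeOfGR (G : Fin n → Matrix (Fin K1) (Fin K2) ℝ) (R : Matrix (Fin p2) (Fin K2) ℝ) :
    Matrix (Fin p2 × Fin n) (Fin K1) ℝ :=
  Matrix.of fun bc k => (G bc.2 * Rᵀ) k bc.1

/-- `R̃` with `R̃ᵀ = (G ×₁ C)_(2)`, so that `(G ×₁ C ×₂ R)_(2) = R R̃ᵀ`. -/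
def tildeOfGC (G : Fin n → Matrix (Fin K1) (Fin K2) ℝ) (C : Matrix (Fin p1) (Fin K1) ℝ) :
    Matrix (Fin p1 × Fin n) (Fin K2) ℝ :=
  Matrix.of fun ac k => (C * G ac.2) ac.1 k


section tensorHelpers
variable {p1 p2 n K1 K2 : ℕ}

lemma tfrobSq_eq_mode1 (B : Fin n → Matrix (Fin p1) (Fin p2) ℝ) :
    tfrobSq B = frobSq (mode1 B) := by
  simp only [tfrobSq, frobSq, mode1, Matrix.of_apply, Fintype.sum_prod_type]
  rw [Finset.sum_comm]
  refine Finset.sum_congr rfl fun c _ => Finset.sum_comm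

lemma tfrob_eq_mode1 (B : Fin n → Matrix (Fin p1) (Fin p2) ℝ) :
    tfrob B = frob (mode1 B) := by rw [tfrob, frob, tfrobSq_eq_mode1]

lemma tfrobSq_nonneg (B : Fin n → Matrix (Fin p1) (Fin p2) ℝ) : 0 ≤ tfrobSq B :=
  Finset.sum_nonneg fun _ _ => frobSq_nonneg _

lemma tfrob_nonneg (B : Fin n → Matrix (Fin p1) (Fin p2) ℝ) : 0 ≤ tfrob B :=
  Real.sqrt_nonneg _

lemma sq_tfrob (B : Fin n → Matrix (Fin p1) (Fin p2) ℝ) : tfrob B ^ 2 = tfrobSq B :=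
  Real.sq_sqrt (tfrobSq_nonneg B)

lemma mode1_add (X Y : Fin n → Matrix (Fin p1) (Fin p2) ℝ) :
    mode1 (fun i => X i + Y i) = mode1 X + mode1 Y := by
  ext a bc; rfl

lemma mode1_left_mul {q : ℕ} (M : Matrix (Fin q) (Fin p1) ℝ)
    (X : Fin n → Matrix (Fin p1) (Fin p2) ℝ) :
    mode1 (fun i => M * X i) = M * mode1 X := by
  ext a bc; simp [mode1, Matrix.mul_apply]

lemma tfrob_add_le (X Y : Fin n → Matrix (Fin p1) (Fin p2) ℝ) :
    tfrob (fun i => X i + Y i) ≤ tfrob X + tfrob Y := by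
  rw [tfrob_eq_mode1, tfrob_eq_mode1, tfrob_eq_mode1, mode1_add]
  exact frob_add_le _ _

lemma tfrob_left_mul_le {q : ℕ} (M : Matrix (Fin q) (Fin p1) ℝ)
    (X : Fin n → Matrix (Fin p1) (Fin p2) ℝ) :
    tfrob (fun i => M * X i) ≤ frob M * tfrob X := by
  rw [tfrob_eq_mode1, tfrob_eq_mode1, mode1_left_mul]
  exact frob_mul_le _ _

lemma tfrobSq_transpose (X : Fin n → Matrix (Fin p1) (Fin p2) ℝ) :
    tfrobSq (fun i => (X i)ᵀ) = tfrobSq X := by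
  simp only [tfrobSq]
  exact Finset.sum_congr rfl fun i _ => frobSq_transpose _

lemma tfrob_right_mul_le {q : ℕ} (N : Matrix (Fin q) (Fin p2) ℝ)
    (X : Fin n → Matrix (Fin p1) (Fin p2) ℝ) :
    tfrob (fun i => X i * Nᵀ) ≤ frob N * tfrob X := by
  have h1 : tfrob (fun i => X i * Nᵀ) = tfrob (fun i => N * (X i)ᵀ) := by
    rw [tfrob, tfrob, ← tfrobSq_transpose (fun i => X i * Nᵀ)]
    congr 1
    refine Finset.sum_congr rfl fun i _ => ?_
    show frobSq (X i * Nᵀ)ᵀ = _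
    rw [Matrix.transpose_mul, Matrix.transpose_transpose]
  rw [h1]
  calc tfrob (fun i => N * (X i)ᵀ) ≤ frob N * tfrob (fun i => (X i)ᵀ) :=
        tfrob_left_mul_le N _
    _ = frob N * tfrob X := by rw [tfrob, tfrob, tfrobSq_transpose]

lemma mode1_mul_transpose (B : Fin n → Matrix (Fin p1) (Fin p2) ℝ) :
    mode1 B * (mode1 B)ᵀ = ∑ i, B i * (B i)ᵀ := by
  ext a a'
  simp only [Matrix.mul_apply, mode1, Matrix.of_apply, Matrix.transpose_apply,
    Fintype.sum_prod_type, Matrix.sum_apply]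
  exact Finset.sum_comm

lemma mode2_mul_transpose (B : Fin n → Matrix (Fin p1) (Fin p2) ℝ) :
    mode2 B * (mode2 B)ᵀ = ∑ i, (B i)ᵀ * B i := by
  ext b b'
  simp only [Matrix.mul_apply, mode2, Matrix.of_apply, Matrix.transpose_apply,
    Fintype.sum_prod_type, Matrix.sum_apply]
  exact Finset.sum_comm

lemma tfrobSq_right_gram {p k q : ℕ} (A : Matrix (Fin p) (Fin k) ℝ)
    (N : Fin n → Matrix (Fin k) (Fin q) ℝ) :
    (∑ i, frobSq (A * N i)) = (A * (∑ i, N i * (N i)ᵀ) * Aᵀ).trace := by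
  rw [Matrix.mul_sum, Matrix.sum_mul, Matrix.trace_sum]
  refine Finset.sum_congr rfl fun i _ => ?_
  rw [frobSq_eq_trace, Matrix.transpose_mul, ← Matrix.mul_assoc, Matrix.mul_assoc A (N i)]

end tensorHelpers

set_option maxHeartbeats 1000000 in
/-- **Lemma (Tucker product perturbation, Frobenius bound).** -/
theorem tucker_product_perturbation
    (p1 p2 n K1 K2 : ℕ)
    (Gs G : Fin n → Matrix (Fin K1) (Fin K2) ℝ)
    (Cs C : Matrix (Fin p1) (Fin K1) ℝ) (Rs R : Matrix (Fin p2) (Fin K2) ℝ) (ε : ℝ)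
    (SC : Matrix (Fin K1) (Fin K1) ℝ) (SR : Matrix (Fin K2) (Fin K2) ℝ) (σlow : ℝ)
    (hSC : SC = Matrix.diagonal fun j : Fin K1 => sval (mode1 (tuck Gs Cs Rs)) ((j : ℕ) + 1))
    (hSR : SR = Matrix.diagonal fun j : Fin K2 => sval (mode2 (tuck Gs Cs Rs)) ((j : ℕ) + 1))
    (hσlow : σlow = min (sval (mode1 (tuck Gs Cs Rs)) K1) (sval (mode2 (tuck Gs Cs Rs)) K2))
    (hCorth : Csᵀ * Cs = 1) (hRorth : Rsᵀ * Rs = 1)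
    (hCeig : mode1 (tuck Gs Cs Rs) * (mode1 (tuck Gs Cs Rs))ᵀ * Cs = Cs * (SC * SC))
    (hReig : mode2 (tuck Gs Cs Rs) * (mode2 (tuck Gs Cs Rs))ᵀ * Rs = Rs * (SR * SR))
    (hσpos : 0 < σlow)
    (hε0 : 0 ≤ ε) (hε1 : ε < 1)
    (hpert : frobSq ((C - Cs) * SC) + frobSq ((R - Rs) * SR) +
        tfrobSq (fun i => G i - Gs i) ≤ ε ^ 2 * σlow ^ 2) :
    tfrob (fun i => tuck G C R i - tuck Gs Cs Rs i) ≤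
      (1 + 3 / 2 * ε + ε ^ 2 + 1 / 4 * ε ^ 3) *
        (frob ((C - Cs) * SC) + frob ((R - Rs) * SR) + tfrob (fun i => G i - Gs i)) := by
  set ΔC := C - Cs with hΔC
  set ΔR := R - Rs with hΔR
  set ΔG := fun i => G i - Gs i with hΔG
  -- Gram matrix identities
  have hSCT : SCᵀ = SC := by rw [hSC]; exact Matrix.diagonal_transpose _
  have hSRT : SRᵀ = SR := by rw [hSR]; exact Matrix.diagonal_transpose _
  have hRgram : ∀ (M : Matrix (Fin K1) (Fin K2) ℝ), (M * Rsᵀ) * (M * Rsᵀ)ᵀ = M * Mᵀ := by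
    intro M
    simp only [Matrix.transpose_mul, Matrix.transpose_transpose, Matrix.mul_assoc]
    rw [← Matrix.mul_assoc Rsᵀ Rs, hRorth, Matrix.one_mul]
  have hP : (∑ i, Gs i * (Gs i)ᵀ) = SC * SC := by
    have hslice : ∀ i, (tuck Gs Cs Rs i) * (tuck Gs Cs Rs i)ᵀ =
        Cs * ((Gs i * (Gs i)ᵀ) * Csᵀ) := by
      intro i
      show (Cs * Gs i * Rsᵀ) * (Cs * Gs i * Rsᵀ)ᵀ = _
      simp only [Matrix.transpose_mul, Matrix.transpose_transpose, Matrix.mul_assoc]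
      rw [← Matrix.mul_assoc Rsᵀ Rs, hRorth, Matrix.one_mul]
    have hB1 : mode1 (tuck Gs Cs Rs) * (mode1 (tuck Gs Cs Rs))ᵀ =
        Cs * ((∑ i, Gs i * (Gs i)ᵀ) * Csᵀ) := by
      rw [mode1_mul_transpose, Finset.sum_congr rfl fun i _ => hslice i,
        ← Matrix.mul_sum, ← Matrix.sum_mul]
    rw [hB1] at hCeig
    rw [Matrix.mul_assoc, Matrix.mul_assoc, hCorth, Matrix.mul_one] at hCeig
    have := congrArg (fun X => Csᵀ * X) hCeig
    simpa only [← Matrix.mul_assoc, hCorth, Matrix.one_mul] using this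
  have hQ : (∑ i, (Gs i)ᵀ * Gs i) = SR * SR := by
    have hslice : ∀ i, (tuck Gs Cs Rs i)ᵀ * (tuck Gs Cs Rs i) =
        Rs * (((Gs i)ᵀ * Gs i) * Rsᵀ) := by
      intro i
      show (Cs * Gs i * Rsᵀ)ᵀ * (Cs * Gs i * Rsᵀ) = _
      simp only [Matrix.transpose_mul, Matrix.transpose_transpose, Matrix.mul_assoc]
      rw [← Matrix.mul_assoc Csᵀ Cs, hCorth, Matrix.one_mul]
    have hB2 : mode2 (tuck Gs Cs Rs) * (mode2 (tuck Gs Cs Rs))ᵀ =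
        Rs * ((∑ i, (Gs i)ᵀ * Gs i) * Rsᵀ) := by
      rw [mode2_mul_transpose, Finset.sum_congr rfl fun i _ => hslice i,
        ← Matrix.mul_sum, ← Matrix.sum_mul]
    rw [hB2] at hReig
    rw [Matrix.mul_assoc, Matrix.mul_assoc, hRorth, Matrix.mul_one] at hReig
    have := congrArg (fun X => Rsᵀ * X) hReig
    simpa only [← Matrix.mul_assoc, hRorth, Matrix.one_mul] using this
  -- exact norm identities
  have key1 : tfrobSq (fun i => ΔC * (Gs i * Rsᵀ)) = frobSq (ΔC * SC) := by
    rw [tfrobSq, tfrobSq_right_gram, Finset.sum_congr rfl fun i _ => hRgram (Gs i), hP]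
    rw [frobSq_eq_trace, Matrix.transpose_mul, hSCT]
    simp only [Matrix.mul_assoc]
  have key2 : tfrobSq (fun i => ΔR * (Gs i)ᵀ) = frobSq (ΔR * SR) := by
    have h : (∑ i, (Gs i)ᵀ * ((Gs i)ᵀ)ᵀ) = SR * SR := by
      simpa only [Matrix.transpose_transpose] using hQ
    rw [tfrobSq, tfrobSq_right_gram, h]
    rw [frobSq_eq_trace, Matrix.transpose_mul, hSRT]
    simp only [Matrix.mul_assoc]
  have hT1 : tfrob (fun i => ΔC * (Gs i * Rsᵀ)) = frob (ΔC * SC) := by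
    rw [tfrob, key1]; rfl
  have hGdRb : tfrob (fun i => Gs i * ΔRᵀ) = frob (ΔR * SR) := by
    have h : (fun i => Gs i * ΔRᵀ) = fun i => (ΔR * (Gs i)ᵀ)ᵀ := by
      funext i; rw [Matrix.transpose_mul, Matrix.transpose_transpose]
    rw [tfrob, h, tfrobSq_transpose, key2]; rfl
  have hdropC : ∀ (X : Fin n → Matrix (Fin K1) (Fin p2) ℝ),
      tfrob (fun i => Cs * X i) = tfrob X := by
    intro X
    rw [tfrob, tfrob]
    congr 1
    exact Finset.sum_congr rfl fun i _ => frobSq_unit_left hCorth _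
  have hdropR : tfrob (fun i => ΔG i * Rsᵀ) = tfrob ΔG := by
    rw [tfrob, tfrob]
    congr 1
    exact Finset.sum_congr rfl fun i _ => frobSq_unit_right hRorth _
  have hT7 : tfrob (fun i => Cs * (Gs i * ΔRᵀ)) = frob (ΔR * SR) := by
    rw [hdropC, hGdRb]
  have hT5 : tfrob (fun i => Cs * (ΔG i * Rsᵀ)) = tfrob ΔG := by
    rw [hdropC, hdropR]
  have hT2 : tfrob (fun i => ΔC * (Gs i * ΔRᵀ)) ≤ frob ΔC * frob (ΔR * SR) := by
    refine (tfrob_left_mul_le ΔC _).trans ?_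
    rw [hGdRb]
  have hT3 : tfrob (fun i => ΔC * (ΔG i * Rsᵀ)) ≤ frob ΔC * tfrob ΔG := by
    refine (tfrob_left_mul_le ΔC _).trans ?_
    rw [hdropR]
  have hGdRle : tfrob (fun i => ΔG i * ΔRᵀ) ≤ frob ΔR * tfrob ΔG := tfrob_right_mul_le ΔR ΔG
  have hT4 : tfrob (fun i => ΔC * (ΔG i * ΔRᵀ)) ≤ frob ΔC * (frob ΔR * tfrob ΔG) :=
    (tfrob_left_mul_le ΔC _).trans (mul_le_mul_of_nonneg_left hGdRle (frob_nonneg ΔC))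
  have hT6 : tfrob (fun i => Cs * (ΔG i * ΔRᵀ)) ≤ frob ΔR * tfrob ΔG := by
    rw [hdropC]; exact hGdRle
  -- decomposition
  have hdec : (fun i => tuck G C R i - tuck Gs Cs Rs i) = fun i =>
      ΔC * (Gs i * Rsᵀ) + (ΔC * (Gs i * ΔRᵀ) + (ΔC * (ΔG i * Rsᵀ) + (ΔC * (ΔG i * ΔRᵀ) +
        (Cs * (ΔG i * Rsᵀ) + (Cs * (ΔG i * ΔRᵀ) + Cs * (Gs i * ΔRᵀ)))))) := by
    funext i
    have hC : C = Cs + ΔC := by rw [hΔC]; abel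
    have hR : R = Rs + ΔR := by rw [hΔR]; abel
    have hG : G i = Gs i + ΔG i := by show G i = Gs i + (G i - Gs i); abel
    show tuck G C R i - tuck Gs Cs Rs i = _
    rw [tuck, tuck, hC, hR, hG]
    simp only [Matrix.transpose_add, Matrix.add_mul, Matrix.mul_add, Matrix.mul_assoc]
    abel
  have htri : tfrob (fun i => tuck G C R i - tuck Gs Cs Rs i) ≤
      frob (ΔC * SC) + (frob ΔC * frob (ΔR * SR) + (frob ΔC * tfrob ΔG +
        (frob ΔC * (frob ΔR * tfrob ΔG) + (tfrob ΔG + (frob ΔR * tfrob ΔG +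
          frob (ΔR * SR)))))) := by
    rw [hdec]
    refine (tfrob_add_le _ _).trans (add_le_add hT1.le ?_)
    refine (tfrob_add_le _ _).trans (add_le_add hT2 ?_)
    refine (tfrob_add_le _ _).trans (add_le_add hT3 ?_)
    refine (tfrob_add_le _ _).trans (add_le_add hT4 ?_)
    refine (tfrob_add_le _ _).trans (add_le_add hT5.le ?_)
    exact (tfrob_add_le _ _).trans (add_le_add hT6 hT7.le)
  -- lower bounds from singular values
  have hd1 : ∀ j : Fin K1, σlow ≤ sval (mode1 (tuck Gs Cs Rs)) ((j : ℕ) + 1) := by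
    intro j
    refine le_trans ?_ (sval_anti _ (Nat.succ_le_of_lt j.isLt))
    rw [hσlow]; exact min_le_left _ _
  have hd2 : ∀ j : Fin K2, σlow ≤ sval (mode2 (tuck Gs Cs Rs)) ((j : ℕ) + 1) := by
    intro j
    refine le_trans ?_ (sval_anti _ (Nat.succ_le_of_lt j.isLt))
    rw [hσlow]; exact min_le_right _ _
  have hca : σlow * frob ΔC ≤ frob (ΔC * SC) := by
    have hsq : σlow ^ 2 * frobSq ΔC ≤ frobSq (ΔC * SC) := by
      rw [hSC, frobSq, frobSq, Finset.mul_sum]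
      refine Finset.sum_le_sum fun i _ => ?_
      rw [Finset.mul_sum]
      refine Finset.sum_le_sum fun j _ => ?_
      rw [Matrix.mul_diagonal]
      have h2 : σlow ^ 2 ≤ (sval (mode1 (tuck Gs Cs Rs)) ((j : ℕ) + 1)) ^ 2 :=
        pow_le_pow_left₀ hσpos.le (hd1 j) 2
      calc σlow ^ 2 * ΔC i j ^ 2 ≤
            (sval (mode1 (tuck Gs Cs Rs)) ((j : ℕ) + 1)) ^ 2 * ΔC i j ^ 2 :=
              mul_le_mul_of_nonneg_right h2 (sq_nonneg _)
        _ = (ΔC i j * sval (mode1 (tuck Gs Cs Rs)) ((j : ℕ) + 1)) ^ 2 := by ring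
    calc σlow * frob ΔC = Real.sqrt (σlow ^ 2 * frobSq ΔC) := by
          rw [Real.sqrt_mul (sq_nonneg σlow), Real.sqrt_sq hσpos.le, frob]
      _ ≤ frob (ΔC * SC) := Real.sqrt_le_sqrt hsq
  have hcr : σlow * frob ΔR ≤ frob (ΔR * SR) := by
    have hsq : σlow ^ 2 * frobSq ΔR ≤ frobSq (ΔR * SR) := by
      rw [hSR, frobSq, frobSq, Finset.mul_sum]
      refine Finset.sum_le_sum fun i _ => ?_
      rw [Finset.mul_sum]
      refine Finset.sum_le_sum fun j _ => ?_
      rw [Matrix.mul_diagonal]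
      have h2 : σlow ^ 2 ≤ (sval (mode2 (tuck Gs Cs Rs)) ((j : ℕ) + 1)) ^ 2 :=
        pow_le_pow_left₀ hσpos.le (hd2 j) 2
      calc σlow ^ 2 * ΔR i j ^ 2 ≤
            (sval (mode2 (tuck Gs Cs Rs)) ((j : ℕ) + 1)) ^ 2 * ΔR i j ^ 2 :=
              mul_le_mul_of_nonneg_right h2 (sq_nonneg _)
        _ = (ΔR i j * sval (mode2 (tuck Gs Cs Rs)) ((j : ℕ) + 1)) ^ 2 := by ring
    calc σlow * frob ΔR = Real.sqrt (σlow ^ 2 * frobSq ΔR) := by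
          rw [Real.sqrt_mul (sq_nonneg σlow), Real.sqrt_sq hσpos.le, frob]
      _ ≤ frob (ΔR * SR) := Real.sqrt_le_sqrt hsq
  have hq : frob (ΔC * SC) ^ 2 + frob (ΔR * SR) ^ 2 + tfrob ΔG ^ 2 ≤ ε ^ 2 * σlow ^ 2 := by
    rw [sq_frob, sq_frob, sq_tfrob]
    exact hpert
  have hfinal := final_arith (frob_nonneg (ΔC * SC)) (frob_nonneg (ΔR * SR))
    (tfrob_nonneg ΔG) (frob_nonneg ΔC) (frob_nonneg ΔR) hσpos hε0 hca hcr hq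
  calc tfrob (fun i => tuck G C R i - tuck Gs Cs Rs i) ≤ _ := htri
    _ = frob (ΔC * SC) + frob (ΔR * SR) + tfrob ΔG +
        (frob ΔC * frob (ΔR * SR) + frob ΔC * tfrob ΔG + frob ΔR * tfrob ΔG +
          frob ΔC * (frob ΔR * tfrob ΔG)) := by ring
    _ ≤ (1 + 3 / 2 * ε + ε ^ 2 + 1 / 4 * ε ^ 3) *
        (frob (ΔC * SC) + frob (ΔR * SR) + tfrob ΔG) := hfinal

end HomoPursuit
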